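/- Let A, B ⊆ [m] with 1 ≤ |A| + |B| ≤ 2m − 1, D = Δ_A + wΔ_B, and D^c = (F_4^m \ {0}) \ D. Then the binary subfield code C^{(2)}_{D^c} has length 2^{2m} − 2^{|A|+|B|}, exactly 2^{2m} distinct codewords (dimension 2m over F_2), and minimum distance 2^{2m−1} − 2^{|A|+|B|−1}; the multiset {wt(c^{(2)}_{D^c}(α,β)) : (α,β) ∈ F_2^m × F_2^m} consists of 0 once, 2^{2m−1} − 2^{|A|+|B|−1} with multiplicity 4^m − 2^{2m−|A|−|B|}, and 2^{2m−1} with multiplicity 2^{2m−|A|−|B|} − 1. Moreover C^{(2)}_{D^c} is a Griesmer code: Σ_{i=0}^{2m−1} ⌈(2^{2m−1} − 2^{|A|+|B|−1}) / 2^i⌉ = 2^{2m} − 2^{|A|+|B|}. -/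

import Mathlib

open Finset

/-- The support of a binary vector, as a finset of coordinates. -/
def supp {m : ℕ} (v : Fin m → ZMod 2) : Finset (Fin m) :=
  Finset.univ.filter (fun i => v i ≠ 0)

/-- The inner product of two binary vectors. -/
def dot2 {m : ℕ} (u v : Fin m → ZMod 2) : ZMod 2 := ∑ i, u i * v i

/-- The simplicial complex generated by `A`: all binary vectors with support contained in `A`. -/
def delta {m : ℕ} (A : Finset (Fin m)) : Finset (Fin m → ZMod 2) :=
  Finset.univ.filter (fun v => supp v ⊆ A)

variable {F : Type} [Field F] [Fintype F] [DecidableEq F]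

/-- The embedding of `F_2 = {0,1}` into a field `F`. -/
def e2 (a : ZMod 2) : F := (a.val : F)

/-- The quaternary vector `d_1 + w·d_2` attached to a pair of binary vectors. -/
def dvec {m : ℕ} (w : F) (p : (Fin m → ZMod 2) × (Fin m → ZMod 2)) : Fin m → F :=
  fun i => e2 (p.1 i) + w * e2 (p.2 i)

/-- The codeword `c^{(2)}_D(α,β) = (α·d_2 + β·(d_1+d_2))_{d = d_1+w·d_2 ∈ D}` of the binary
subfield code, where `π₁, π₂` extract the components of the unique representation
`g = π₁(g) + w·π₂(g)`. -/
def cw2F {m : ℕ} (D : Finset (Fin m → F)) (π₁ π₂ : F → ZMod 2)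
    (α β : Fin m → ZMod 2) : {d // d ∈ D} → ZMod 2 :=
  fun d => dot2 α (fun i => π₂ (d.1 i)) + dot2 β (fun i => π₁ (d.1 i) + π₂ (d.1 i))

/-- The Hamming weight of the codeword `c^{(2)}_D(α,β)`, counted over the index set `D`. -/
def wt2F {m : ℕ} (D : Finset (Fin m → F)) (π₁ π₂ : F → ZMod 2)
    (α β : Fin m → ZMod 2) : ℕ :=
  (D.filter (fun d =>
    dot2 α (fun i => π₂ (d i)) + dot2 β (fun i => π₁ (d i) + π₂ (d i)) ≠ 0)).card

set_option linter.unusedSectionVars false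
set_option linter.unusedVariables false

lemma z2cases (z : ZMod 2) : z = 0 ∨ z = 1 := by revert z; decide
lemma z2ne (z : ZMod 2) (h : z ≠ 0) : z = 1 := by revert z h; decide
lemma z2add (z : ZMod 2) : z + z = 0 := by revert z; decide
lemma vadd_self {m : ℕ} (v : Fin m → ZMod 2) : v + v = 0 := funext fun i => z2add (v i)

lemma dot2_add_right {m : ℕ} (γ u v : Fin m → ZMod 2) :
    dot2 γ (u + v) = dot2 γ u + dot2 γ v := by
  simp [dot2, Pi.add_apply, mul_add, Finset.sum_add_distrib]
lemma dot2_add_left {m : ℕ} (γ δ v : Fin m → ZMod 2) :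
    dot2 (γ + δ) v = dot2 γ v + dot2 δ v := by
  simp [dot2, Pi.add_apply, add_mul, Finset.sum_add_distrib]
lemma dot2_zero_right {m : ℕ} (γ : Fin m → ZMod 2) : dot2 γ 0 = 0 := by simp [dot2]
lemma dot2_zero_left {m : ℕ} (γ : Fin m → ZMod 2) : dot2 0 γ = 0 := by simp [dot2]

def evec {m : ℕ} (i : Fin m) : Fin m → ZMod 2 := fun j => if j = i then 1 else 0
lemma dot2_evec {m : ℕ} (γ : Fin m → ZMod 2) (i : Fin m) : dot2 γ (evec i) = γ i := by
  simp [dot2, evec, mul_ite]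

lemma mem_delta {m : ℕ} {A : Finset (Fin m)} {v : Fin m → ZMod 2} :
    v ∈ delta A ↔ ∀ i, v i ≠ 0 → i ∈ A := by
  simp [delta, supp, Finset.subset_iff]

lemma zero_mem_delta {m : ℕ} (A : Finset (Fin m)) : (0 : Fin m → ZMod 2) ∈ delta A := by
  simp [mem_delta]
lemma evec_mem_delta {m : ℕ} {A : Finset (Fin m)} {i : Fin m} (h : i ∈ A) :
    evec i ∈ delta A := by
  rw [mem_delta]; intro j hj
  by_cases hji : j = i
  · subst hji; exact h
  · simp [evec, hji] at hj
lemma add_mem_delta {m : ℕ} {A : Finset (Fin m)} {u v : Fin m → ZMod 2}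
    (hu : u ∈ delta A) (hv : v ∈ delta A) : u + v ∈ delta A := by
  rw [mem_delta] at *
  intro i hi
  by_cases h1 : u i = 0
  · exact hv i (by simpa [Pi.add_apply, h1] using hi)
  · exact hu i h1

lemma card_delta {m : ℕ} (A : Finset (Fin m)) : (delta A).card = 2 ^ A.card := by
  rw [← Finset.card_powerset]
  apply Finset.card_bij (fun v _ => supp v)
  · intro v hv; rw [Finset.mem_powerset]; exact (Finset.mem_filter.1 hv).2
  · intro u hu v hv h
    funext i
    rcases z2cases (u i) with h1 | h1 <;> rcases z2cases (v i) with h2 | h2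
    · rw [h1, h2]
    · have : i ∈ supp v := by simp [supp, h2]
      rw [← h] at this; simp [supp, h1] at this
    · have : i ∈ supp u := by simp [supp, h1]
      rw [h] at this; simp [supp, h2] at this
    · rw [h1, h2]
  · intro s hs
    refine ⟨fun i => if i ∈ s then 1 else 0, ?_, ?_⟩
    · rw [mem_delta]; intro i hi
      by_cases h : i ∈ s
      · exact Finset.mem_powerset.1 hs h
      · simp [h] at hi
    · ext i; simp [supp]

section Half
variable {γ : Type*} [DecidableEq γ] [AddCommMonoid γ]

lemma half_filter (S : Finset γ) (f : γ → ZMod 2)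
    (hfadd : ∀ x y, f (x + y) = f x + f y)
    (s₀ : γ) (hs0 : s₀ + s₀ = 0) (hmem : s₀ ∈ S) (hcl : ∀ x ∈ S, x + s₀ ∈ S)
    (hf1 : f s₀ = 1) :
    2 * (S.filter (fun x => f x ≠ 0)).card = S.card := by
  have hinv : ∀ x : γ, x + s₀ + s₀ = x := by
    intro x; rw [add_assoc, hs0, add_zero]
  have key : (S.filter (fun x => f x ≠ 0)).card = (S.filter (fun x => ¬ f x ≠ 0)).card := by
    apply Finset.card_bij' (fun x _ => x + s₀) (fun x _ => x + s₀)
    · intro x hx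
      rw [Finset.mem_filter] at hx ⊢
      have h1 : f x = 1 := by
        have := hx.2; revert this; generalize f x = z; revert z; decide
      refine ⟨hcl x hx.1, ?_⟩
      rw [hfadd, h1, hf1]; decide
    · intro x hx
      rw [Finset.mem_filter] at hx ⊢
      have h1 : f x = 0 := by
        have := hx.2; revert this; generalize f x = z; revert z; decide
      refine ⟨hcl x hx.1, ?_⟩
      rw [hfadd, h1, hf1]; decide
    · intro x _; exact hinv x
    · intro x _; exact hinv x
  have := Finset.card_filter_add_card_filter_not (s := S)
    (p := fun x => f x ≠ 0)
  omega

end Half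

section Counts
variable {m : ℕ}

/-- abbreviation for pairs -/
local notation "P" => ((Fin m → ZMod 2) × (Fin m → ZMod 2))

def fP (α β : Fin m → ZMod 2) (p : (Fin m → ZMod 2) × (Fin m → ZMod 2)) : ZMod 2 :=
  dot2 α p.2 + dot2 β (p.1 + p.2)

lemma fP_add (α β : Fin m → ZMod 2) (p q : P) :
    fP α β (p + q) = fP α β p + fP α β q := by
  simp only [fP, Prod.fst_add, Prod.snd_add]
  have h1 : p.1 + q.1 + (p.2 + q.2) = (p.1 + p.2) + (q.1 + q.2) := by abel
  rw [h1, dot2_add_right, dot2_add_right]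
  abel

lemma fP_split (α β : Fin m → ZMod 2) (p : P) :
    fP α β p = dot2 β p.1 + dot2 (α + β) p.2 := by
  simp only [fP]
  rw [dot2_add_right, dot2_add_left]
  abel

lemma card_univ_pairs :
    (Finset.univ : Finset ((Fin m → ZMod 2) × (Fin m → ZMod 2))).card = 2 ^ (2 * m) := by
  simp [Finset.card_univ, ZMod.card]
  rw [two_mul, pow_add]

lemma count_full {α β : Fin m → ZMod 2} (h : ¬(α = 0 ∧ β = 0)) :
    (Finset.univ.filter (fun p : P => fP α β p ≠ 0)).card = 2 ^ (2 * m - 1) := by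
  have hm : 1 ≤ m := by
    by_contra hc
    interval_cases m
    apply h
    constructor <;> · funext i; exact absurd i.2 (by omega)
  obtain ⟨s₀, hf1⟩ : ∃ s₀ : P, fP α β s₀ = 1 := by
    by_cases hβ : β = 0
    · have hα : α ≠ 0 := fun hc => h ⟨hc, hβ⟩
      obtain ⟨i, hi⟩ : ∃ i, α i ≠ 0 := by
        by_contra hc; push_neg at hc
        exact hα (funext fun i => by simpa using hc i)
      refine ⟨(0, evec i), ?_⟩
      rw [fP_split, dot2_zero_right, dot2_evec]
      simp [hβ, z2ne _ hi]
    · obtain ⟨i, hi⟩ : ∃ i, β i ≠ 0 := by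
        by_contra hc; push_neg at hc
        exact hβ (funext fun i => by simpa using hc i)
      refine ⟨(evec i, 0), ?_⟩
      rw [fP_split, dot2_zero_right, dot2_evec]
      simp [z2ne _ hi]
  have hh := half_filter Finset.univ (fP α β) (fP_add α β) s₀
    (Prod.ext_iff.2 ⟨vadd_self _, vadd_self _⟩) (Finset.mem_univ _)
    (fun x _ => Finset.mem_univ _) hf1
  rw [card_univ_pairs] at hh
  have h2 : (2:ℕ) ^ (2 * m) = 2 * 2 ^ (2 * m - 1) := by
    obtain ⟨k, hk⟩ : ∃ k, 2 * m = k + 1 := ⟨2 * m - 1, by omega⟩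
    rw [hk]; simp [pow_succ, Nat.add_sub_cancel, mul_comm]
  omega

lemma dot2_eq_zero_on {γ v : Fin m → ZMod 2} (h : ∀ i, v i ≠ 0 → γ i = 0) :
    dot2 γ v = 0 := by
  apply Finset.sum_eq_zero
  intro i _
  by_cases hv : v i = 0
  · rw [hv, mul_zero]
  · rw [h i hv, zero_mul]

lemma count_D_zero {α β : Fin m → ZMod 2} {A B : Finset (Fin m)}
    (h1 : ∀ i ∈ A, β i = 0) (h2 : ∀ i ∈ B, α i + β i = 0) :
    ((delta A ×ˢ delta B).filter (fun p : P => fP α β p ≠ 0)).card = 0 := by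
  rw [Finset.card_eq_zero, Finset.filter_eq_empty_iff]
  intro p hp
  rw [Finset.mem_product] at hp
  simp only [ne_eq, not_not]
  rw [fP_split]
  have ha : dot2 β p.1 = 0 :=
    dot2_eq_zero_on (fun i hi => h1 i (mem_delta.1 hp.1 i hi))
  have hb : dot2 (α + β) p.2 = 0 :=
    dot2_eq_zero_on (fun i hi => h2 i (mem_delta.1 hp.2 i hi))
  rw [ha, hb, add_zero]

lemma count_D_half {α β : Fin m → ZMod 2} {A B : Finset (Fin m)}
    (hV : ¬((∀ i ∈ A, β i = 0) ∧ (∀ i ∈ B, α i + β i = 0))) :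
    ((delta A ×ˢ delta B).filter (fun p : P => fP α β p ≠ 0)).card
      = 2 ^ (A.card + B.card - 1) := by
  obtain ⟨s₀, hmem, hf1, hone⟩ :
      ∃ s₀ : P, s₀ ∈ delta A ×ˢ delta B ∧ fP α β s₀ = 1 ∧ 1 ≤ A.card + B.card := by
    by_cases hA : ∀ i ∈ A, β i = 0
    · have hB : ¬ ∀ i ∈ B, α i + β i = 0 := fun h => hV ⟨hA, h⟩
      push_neg at hB
      obtain ⟨i, hiB, hi⟩ := hB
      refine ⟨(0, evec i), ?_, ?_, ?_⟩
      · rw [Finset.mem_product]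
        exact ⟨zero_mem_delta A, evec_mem_delta hiB⟩
      · rw [fP_split]
        simp only [dot2_zero_right, dot2_evec, zero_add, Pi.add_apply]
        exact z2ne _ hi
      · have : 0 < B.card := Finset.card_pos.2 ⟨i, hiB⟩
        omega
    · push_neg at hA
      obtain ⟨i, hiA, hi⟩ := hA
      refine ⟨(evec i, 0), ?_, ?_, ?_⟩
      · rw [Finset.mem_product]
        exact ⟨evec_mem_delta hiA, zero_mem_delta B⟩
      · rw [fP_split]
        simp only [dot2_zero_right, dot2_evec, add_zero]
        exact z2ne _ hi
      · have : 0 < A.card := Finset.card_pos.2 ⟨i, hiA⟩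
        omega
  have hcl : ∀ x ∈ delta A ×ˢ delta B, x + s₀ ∈ delta A ×ˢ delta B := by
    intro x hx
    rw [Finset.mem_product] at hx hmem ⊢
    exact ⟨add_mem_delta hx.1 hmem.1, add_mem_delta hx.2 hmem.2⟩
  have hh := half_filter (delta A ×ˢ delta B) (fP α β) (fP_add α β) s₀
    (Prod.ext_iff.2 ⟨vadd_self _, vadd_self _⟩) hmem hcl hf1
  rw [Finset.card_product, card_delta, card_delta, ← pow_add] at hh
  have h2 : (2:ℕ) ^ (A.card + B.card) = 2 * 2 ^ (A.card + B.card - 1) := by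
    obtain ⟨k, hk⟩ : ∃ k, A.card + B.card = k + 1 := ⟨A.card + B.card - 1, by omega⟩
    rw [hk]; simp [pow_succ, Nat.add_sub_cancel, mul_comm]
  omega

lemma mem_delta_compl {v : Fin m → ZMod 2} {A : Finset (Fin m)} :
    v ∈ delta Aᶜ ↔ ∀ i ∈ A, v i = 0 := by
  rw [mem_delta]
  constructor
  · intro h i hi
    by_contra hv
    exact (Finset.mem_compl.1 (h i hv)) hi
  · intro h i hv
    rw [Finset.mem_compl]
    intro hi
    exact hv (h i hi)

lemma count_V (A B : Finset (Fin m)) :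
    (Finset.univ.filter (fun q : P =>
        (∀ i ∈ A, q.2 i = 0) ∧ ∀ i ∈ B, q.1 i + q.2 i = 0)).card
      = 2 ^ (2 * m - A.card - B.card) := by
  have hkey : (Finset.univ.filter (fun q : P =>
      (∀ i ∈ A, q.2 i = 0) ∧ ∀ i ∈ B, q.1 i + q.2 i = 0)).card
      = (delta Aᶜ ×ˢ delta Bᶜ).card := by
    refine Finset.card_nbij' (fun q => (q.2, q.1 + q.2)) (fun r => (r.1 + r.2, r.1))
      ?_ ?_ ?_ ?_
    · intro q hq
      rw [Finset.mem_coe, Finset.mem_filter] at hq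
      rw [Finset.mem_coe, Finset.mem_product]
      exact ⟨mem_delta_compl.2 hq.2.1, mem_delta_compl.2 (fun i hi => hq.2.2 i hi)⟩
    · intro r hr
      rw [Finset.mem_coe, Finset.mem_product] at hr
      rw [Finset.mem_coe, Finset.mem_filter]
      refine ⟨Finset.mem_univ _, fun i hi => mem_delta_compl.1 hr.1 i hi, fun i hi => ?_⟩
      have h1 : r.2 i = 0 := mem_delta_compl.1 hr.2 i hi
      simp only [Pi.add_apply, h1, add_zero, z2add]
    · intro q _
      have h1 : q.2 + (q.1 + q.2) = q.1 := by
        rw [show q.2 + (q.1 + q.2) = q.1 + (q.2 + q.2) by abel, vadd_self, add_zero]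
      show (q.2 + (q.1 + q.2), q.2) = q
      rw [h1]
    · intro r _
      have h1 : (r.1 + r.2) + r.1 = r.2 := by
        rw [show (r.1 + r.2) + r.1 = r.2 + (r.1 + r.1) by abel, vadd_self, add_zero]
      show (r.1, (r.1 + r.2) + r.1) = r
      rw [h1]
  rw [hkey, Finset.card_product, card_delta, card_delta, ← pow_add]
  congr 1
  have ha : A.card ≤ m := by
    have := Finset.card_le_univ A
    simpa using this
  have hb : B.card ≤ m := by
    have := Finset.card_le_univ B
    simpa using this
  rw [Finset.card_compl, Finset.card_compl]
  simp only [Fintype.card_fin]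
  omega

end Counts

section Griesmer

lemma geom2 (k : ℕ) : ∑ i ∈ Finset.range k, (2:ℤ)^i = 2^k - 1 := by
  induction k with
  | zero => simp
  | succ n ih => rw [Finset.sum_range_succ, ih]; ring

lemma geom2' (k : ℕ) : ∑ i ∈ Finset.range k, (2:ℤ)^(k-1-i) = 2^k - 1 := by
  rw [Finset.sum_range_reflect (fun i => (2:ℤ)^i) k]
  exact geom2 k

lemma griesmer_sum (n s : ℕ) (h1 : 1 ≤ s) (h2 : s + 1 ≤ n) :
    ∑ i ∈ Finset.range n, ⌈((2^(n-1) - 2^(s-1) : ℚ)) / 2^i⌉ = (2^n - 2^s : ℤ) := by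
  have hterm : ∀ i ∈ Finset.range n,
      ⌈((2^(n-1) - 2^(s-1) : ℚ)) / 2^i⌉
        = (2:ℤ)^(n-1-i) - (if i < s then (2:ℤ)^(s-1-i) else 0) := by
    intro i hi
    rw [Finset.mem_range] at hi
    have h2i : (2:ℚ)^i ≠ 0 := by positivity
    by_cases hs : i < s
    · have e1 : ((2:ℚ)^(n-1) - 2^(s-1))/2^i = (((2:ℤ)^(n-1-i) - 2^(s-1-i) : ℤ) : ℚ) := by
        rw [div_eq_iff h2i]
        push_cast
        rw [sub_mul, ← pow_add, ← pow_add]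
        congr 2 <;> omega
      rw [e1, Int.ceil_intCast]
      rw [if_pos hs]
    · have e1 : ((2:ℚ)^(n-1) - 2^(s-1))/2^i
          = -((2:ℚ)^(s-1)/2^i) + (((2:ℤ)^(n-1-i) : ℤ) : ℚ) := by
        rw [sub_div]
        have hX : (2:ℚ)^(n-1)/2^i = (((2:ℤ)^(n-1-i) : ℤ) : ℚ) := by
          rw [div_eq_iff h2i]
          push_cast
          rw [← pow_add]
          congr 1
          omega
        rw [hX]; ring
      rw [e1, Int.ceil_add_intCast, Int.ceil_neg]
      have hfl : ⌊(2:ℚ)^(s-1)/2^i⌋ = 0 := by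
        rw [Int.floor_eq_zero_iff]
        constructor
        · positivity
        · rw [div_lt_one (by positivity)]
          have : (2:ℕ)^(s-1) < 2^i := Nat.pow_lt_pow_right one_lt_two (by omega)
          exact_mod_cast this
      rw [hfl, if_neg hs]
      simp
  rw [Finset.sum_congr rfl hterm, Finset.sum_sub_distrib]
  have hsub : Finset.range s ⊆ Finset.range n := Finset.range_subset_range.2 (by omega)
  have hite : ∑ i ∈ Finset.range n, (if i < s then (2:ℤ)^(s-1-i) else 0)
      = ∑ i ∈ Finset.range s, (2:ℤ)^(s-1-i) := by
    rw [← Finset.sum_subset hsub]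
    · apply Finset.sum_congr rfl
      intro i hi
      rw [if_pos (Finset.mem_range.1 hi)]
    · intro i _ hi
      rw [if_neg (by simpa using hi)]
  rw [hite, geom2' n, geom2' s]
  ring

end Griesmer

section Transfer
variable {m : ℕ}

variable (w : F) (π₁ π₂ : F → ZMod 2)

lemma iota_pi (hF : Fintype.card F = 4)
    (hπ : ∀ g : F, g = e2 (π₁ g) + w * e2 (π₂ g)) :
    ∀ a b : ZMod 2, π₁ (e2 a + w * e2 b) = a ∧ π₂ (e2 a + w * e2 b) = b := by
  set ι : ZMod 2 × ZMod 2 → F := fun ab => e2 ab.1 + w * e2 ab.2 with hι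
  have hsurj : Function.Surjective ι := fun g => ⟨(π₁ g, π₂ g), (hπ g).symm⟩
  have hcard : Fintype.card (ZMod 2 × ZMod 2) = Fintype.card F := by
    simp [Fintype.card_prod, ZMod.card, hF]
  have hinj : Function.Injective ι :=
    ((Fintype.bijective_iff_surjective_and_card ι).2 ⟨hsurj, hcard⟩).injective
  intro a b
  have h1 : ι (π₁ (ι (a, b)), π₂ (ι (a, b))) = ι (a, b) := (hπ (ι (a, b))).symm
  have h2 := hinj h1
  exact ⟨congrArg Prod.fst h2, congrArg Prod.snd h2⟩

lemma pi_dvec (hF : Fintype.card F = 4)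
    (hπ : ∀ g : F, g = e2 (π₁ g) + w * e2 (π₂ g))
    (p : (Fin m → ZMod 2) × (Fin m → ZMod 2)) (i : Fin m) :
    π₁ (dvec w p i) = p.1 i ∧ π₂ (dvec w p i) = p.2 i :=
  iota_pi w π₁ π₂ hF hπ (p.1 i) (p.2 i)

lemma dvec_injective (hF : Fintype.card F = 4)
    (hπ : ∀ g : F, g = e2 (π₁ g) + w * e2 (π₂ g)) :
    Function.Injective (dvec w (m := m)) := by
  intro p q h
  have h1 : p.1 = q.1 := by
    funext i
    rw [← (pi_dvec w π₁ π₂ hF hπ p i).1, ← (pi_dvec w π₁ π₂ hF hπ q i).1, h]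
  have h2 : p.2 = q.2 := by
    funext i
    rw [← (pi_dvec w π₁ π₂ hF hπ p i).2, ← (pi_dvec w π₁ π₂ hF hπ q i).2, h]
  exact Prod.ext_iff.2 ⟨h1, h2⟩

lemma dvec_surjective (hπ : ∀ g : F, g = e2 (π₁ g) + w * e2 (π₂ g)) :
    Function.Surjective (dvec w (m := m)) := fun d =>
  ⟨(fun i => π₁ (d i), fun i => π₂ (d i)), (funext fun i => (hπ (d i)).symm)⟩

lemma pix_zero (hF : Fintype.card F = 4)
    (hπ : ∀ g : F, g = e2 (π₁ g) + w * e2 (π₂ g)) :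
    π₁ (0 : F) = 0 ∧ π₂ (0 : F) = 0 := by
  have := iota_pi w π₁ π₂ hF hπ 0 0
  simpa [e2] using this

lemma Qv_dvec (hF : Fintype.card F = 4)
    (hπ : ∀ g : F, g = e2 (π₁ g) + w * e2 (π₂ g))
    (α β : Fin m → ZMod 2) (p : (Fin m → ZMod 2) × (Fin m → ZMod 2)) :
    dot2 α (fun i => π₂ (dvec w p i))
      + dot2 β (fun i => π₁ (dvec w p i) + π₂ (dvec w p i)) = fP α β p := by
  have h2 : (fun i => π₂ (dvec w p i)) = p.2 :=
    funext fun i => (pi_dvec w π₁ π₂ hF hπ p i).2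
  have h12 : (fun i => π₁ (dvec w p i) + π₂ (dvec w p i)) = p.1 + p.2 :=
    funext fun i => by
      rw [(pi_dvec w π₁ π₂ hF hπ p i).1, (pi_dvec w π₁ π₂ hF hπ p i).2]; rfl
  rw [h2, h12]; rfl

end Transfer

section Main
variable {m : ℕ} (w : F) (π₁ π₂ : F → ZMod 2)

lemma wt_formula (hF : Fintype.card F = 4)
    (hπ : ∀ g : F, g = e2 (π₁ g) + w * e2 (π₂ g))
    (A B : Finset (Fin m)) (α β : Fin m → ZMod 2) :
    wt2F ((Finset.univ.erase (0 : Fin m → F)) \ ((delta A ×ˢ delta B).image (dvec w)))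
        π₁ π₂ α β
      = (Finset.univ.filter
          (fun p : (Fin m → ZMod 2) × (Fin m → ZMod 2) => fP α β p ≠ 0)).card
        - ((delta A ×ˢ delta B).filter
          (fun p : (Fin m → ZMod 2) × (Fin m → ZMod 2) => fP α β p ≠ 0)).card := by
  classical
  have hz := pix_zero w π₁ π₂ hF hπ
  have hQ0 : ¬ (dot2 α (fun i => π₂ ((0 : Fin m → F) i))
      + dot2 β (fun i => π₁ ((0 : Fin m → F) i) + π₂ ((0 : Fin m → F) i)) ≠ 0) := by
    simp only [ne_eq, not_not]
    have h1 : (fun i : Fin m => π₂ ((0 : Fin m → F) i)) = (0 : Fin m → ZMod 2) :=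
      funext fun i => by simp [hz.2]
    have h12 : (fun i : Fin m => π₁ ((0 : Fin m → F) i) + π₂ ((0 : Fin m → F) i))
        = (0 : Fin m → ZMod 2) := funext fun i => by simp [hz.1, hz.2]
    rw [h1, h12, dot2_zero_right, dot2_zero_right, add_zero]
  have htrans : ∀ S : Finset ((Fin m → ZMod 2) × (Fin m → ZMod 2)),
      ((S.image (dvec w)).filter (fun d => dot2 α (fun i => π₂ (d i))
          + dot2 β (fun i => π₁ (d i) + π₂ (d i)) ≠ 0)).card
        = (S.filter (fun p => fP α β p ≠ 0)).card := by
    intro S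
    rw [Finset.filter_image,
      Finset.card_image_of_injective _ (dvec_injective w π₁ π₂ hF hπ)]
    congr 1
    apply Finset.filter_congr
    intro p _
    rw [Qv_dvec w π₁ π₂ hF hπ α β p]
  have huniv : (Finset.univ : Finset (Fin m → F)) = Finset.univ.image (dvec w) := by
    ext d
    simp only [Finset.mem_univ, true_iff, Finset.mem_image]
    obtain ⟨p, hp⟩ := dvec_surjective w π₁ π₂ hπ d
    exact ⟨p, trivial, hp⟩
  have himp : ∀ y : Fin m → F, (dot2 α (fun i => π₂ (y i))
      + dot2 β (fun i => π₁ (y i) + π₂ (y i)) ≠ 0) → y ≠ 0 :=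
    fun y hQ hy => hQ0 (hy ▸ hQ)
  have hsplit : ((Finset.univ.erase (0 : Fin m → F))
        \ ((delta A ×ˢ delta B).image (dvec w))).filter
        (fun d => dot2 α (fun i => π₂ (d i))
          + dot2 β (fun i => π₁ (d i) + π₂ (d i)) ≠ 0)
      = (Finset.univ.filter (fun d => dot2 α (fun i => π₂ (d i))
          + dot2 β (fun i => π₁ (d i) + π₂ (d i)) ≠ 0))
        \ (((delta A ×ˢ delta B).image (dvec w)).filter
          (fun d => dot2 α (fun i => π₂ (d i))
            + dot2 β (fun i => π₁ (d i) + π₂ (d i)) ≠ 0)) := by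
    ext x
    simp only [Finset.mem_filter, Finset.mem_sdiff, Finset.mem_erase, Finset.mem_univ,
      true_and, and_true]
    have := himp x
    tauto
  show (((Finset.univ.erase (0 : Fin m → F))
      \ ((delta A ×ˢ delta B).image (dvec w))).filter
      (fun d => dot2 α (fun i => π₂ (d i))
        + dot2 β (fun i => π₁ (d i) + π₂ (d i)) ≠ 0)).card = _
  rw [hsplit, Finset.card_sdiff_of_subset (Finset.filter_subset_filter _ (Finset.subset_univ _))]
  rw [htrans (delta A ×ˢ delta B)]
  congr 1
  rw [huniv, htrans Finset.univ]

lemma wt_val (hF : Fintype.card F = 4)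
    (hπ : ∀ g : F, g = e2 (π₁ g) + w * e2 (π₂ g))
    (A B : Finset (Fin m)) (α β : Fin m → ZMod 2) :
    wt2F ((Finset.univ.erase (0 : Fin m → F)) \ ((delta A ×ˢ delta B).image (dvec w)))
        π₁ π₂ α β
      = if (∀ i ∈ A, β i = 0) ∧ (∀ i ∈ B, α i + β i = 0) then
          (if α = 0 ∧ β = 0 then 0 else 2 ^ (2 * m - 1))
        else 2 ^ (2 * m - 1) - 2 ^ (A.card + B.card - 1) := by
  rw [wt_formula w π₁ π₂ hF hπ A B α β]
  by_cases hV : (∀ i ∈ A, β i = 0) ∧ (∀ i ∈ B, α i + β i = 0)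
  · rw [if_pos hV]
    by_cases h0 : α = 0 ∧ β = 0
    · rw [if_pos h0]
      obtain ⟨h0a, h0b⟩ := h0
      subst h0a; subst h0b
      have hze : (Finset.univ.filter
          (fun p : (Fin m → ZMod 2) × (Fin m → ZMod 2) => fP 0 0 p ≠ 0)) = ∅ := by
        rw [Finset.filter_eq_empty_iff]
        intro p _
        simp only [ne_eq, not_not, fP, dot2_zero_left, add_zero]
      rw [hze]
      simp
    · rw [if_neg h0, count_full h0, count_D_zero hV.1 hV.2]
      exact Nat.sub_zero _
  · rw [if_neg hV]
    have h0 : ¬(α = 0 ∧ β = 0) := by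
      rintro ⟨rfl, rfl⟩
      exact hV ⟨fun i _ => rfl, fun i _ => by simp⟩
    rw [count_full h0, count_D_half hV]

lemma val_split {γ : Type*} [DecidableEq γ] {s t : Finset γ} (h : s ⊆ t) :
    t.val = s.val + (t \ s).val := by
  rw [Finset.sdiff_val, add_tsub_cancel_of_le (Finset.val_le_iff.2 h)]

lemma map_const_replicate {γ : Type*} (s : Finset γ) (f : γ → ℕ) (c : ℕ)
    (h : ∀ x ∈ s, f x = c) : s.val.map f = Multiset.replicate s.card c := by
  rw [Multiset.eq_replicate]
  constructor
  · rw [Multiset.card_map]; rfl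
  · intro b hb
    obtain ⟨x, hx, rfl⟩ := Multiset.mem_map.1 hb
    exact h x hx

lemma vcancel {m : ℕ} (u v : Fin m → ZMod 2) (h : u + v = 0) : u = v := by
  calc u = u + (v + v) := by rw [vadd_self, add_zero]
  _ = (u + v) + v := by abel
  _ = v := by rw [h, zero_add]

end Main


/-- Theorem 5.2: for `D = Δ_A + wΔ_B` with `1 ≤ |A|+|B| ≤ 2m−1`, the binary subfield code
`C^{(2)}_{D^c}` is a `[2^{2m} − 2^{|A|+|B|}, 2m, 2^{2m−1} − 2^{|A|+|B|−1}]` two-weight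
binary code with the stated weight distribution, and it is a Griesmer code. -/
theorem binary_subfield_complement_Griesmer {m : ℕ} (hm : 1 ≤ m)
    (hF : Fintype.card F = 4) (w : F) (hw : w ^ 2 + w + 1 = 0)
    (π₁ π₂ : F → ZMod 2) (hπ : ∀ g : F, g = e2 (π₁ g) + w * e2 (π₂ g))
    (A B : Finset (Fin m)) (hAB : 1 ≤ A.card + B.card) (hAB' : A.card + B.card ≤ 2 * m - 1) :
    ((Finset.univ.erase (0 : Fin m → F)) \ ((delta A ×ˢ delta B).image (dvec w))).card
      = 2 ^ (2 * m) - 2 ^ (A.card + B.card)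
    ∧ (Finset.univ.image
        (fun ab : (Fin m → ZMod 2) × (Fin m → ZMod 2) =>
          cw2F ((Finset.univ.erase (0 : Fin m → F)) \ ((delta A ×ˢ delta B).image (dvec w)))
            π₁ π₂ ab.1 ab.2)).card
      = 2 ^ (2 * m)
    ∧ ((∀ α β : Fin m → ZMod 2,
          wt2F ((Finset.univ.erase (0 : Fin m → F)) \ ((delta A ×ˢ delta B).image (dvec w)))
            π₁ π₂ α β = 0
          ∨ 2 ^ (2 * m - 1) - 2 ^ (A.card + B.card - 1)
            ≤ wt2F ((Finset.univ.erase (0 : Fin m → F))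
                \ ((delta A ×ˢ delta B).image (dvec w))) π₁ π₂ α β)
        ∧ (∃ α β : Fin m → ZMod 2,
          wt2F ((Finset.univ.erase (0 : Fin m → F)) \ ((delta A ×ˢ delta B).image (dvec w)))
            π₁ π₂ α β = 2 ^ (2 * m - 1) - 2 ^ (A.card + B.card - 1)))
    ∧ (Finset.univ.val.map
        (fun ab : (Fin m → ZMod 2) × (Fin m → ZMod 2) =>
          wt2F ((Finset.univ.erase (0 : Fin m → F)) \ ((delta A ×ˢ delta B).image (dvec w)))
            π₁ π₂ ab.1 ab.2))
      = Multiset.replicate 1 0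
        + Multiset.replicate (4 ^ m - 2 ^ (2 * m - A.card - B.card))
            (2 ^ (2 * m - 1) - 2 ^ (A.card + B.card - 1))
        + Multiset.replicate (2 ^ (2 * m - A.card - B.card) - 1) (2 ^ (2 * m - 1))
    ∧ (∑ i ∈ Finset.range (2 * m),
        ⌈((2 ^ (2 * m - 1) - 2 ^ (A.card + B.card - 1) : ℚ)) / 2 ^ i⌉
        = (2 ^ (2 * m) - 2 ^ (A.card + B.card) : ℤ)) := by
  classical
  have hABlt : A.card + B.card - 1 < 2 * m - 1 := by omega
  have hminpos : 0 < 2 ^ (2 * m - 1) - 2 ^ (A.card + B.card - 1) := by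
    have := Nat.pow_lt_pow_right one_lt_two hABlt
    omega
  have h4 : (4 : ℕ) ^ m = 2 ^ (2 * m) := by
    rw [show (4:ℕ) = 2 ^ 2 by norm_num, ← pow_mul]
  have wtv := wt_val w π₁ π₂ hF hπ A B
  have hinjd := dvec_injective w π₁ π₂ hF hπ (m := m)
  have hwt0 : wt2F ((Finset.univ.erase (0 : Fin m → F))
      \ ((delta A ×ˢ delta B).image (dvec w))) π₁ π₂ 0 0 = 0 := by
    rw [wtv, if_pos ⟨fun i _ => rfl, fun i _ => by simp⟩, if_pos ⟨rfl, rfl⟩]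
  -- Part 1 : length
  have hcard_prod : (delta A ×ˢ delta B).card = 2 ^ (A.card + B.card) := by
    rw [Finset.card_product, card_delta, card_delta, ← pow_add]
  have hDFcard : ((delta A ×ˢ delta B).image (dvec w)).card = 2 ^ (A.card + B.card) := by
    rw [Finset.card_image_of_injective _ hinjd, hcard_prod]
  have h0DF : (0 : Fin m → F) ∈ (delta A ×ˢ delta B).image (dvec w) := by
    refine Finset.mem_image.2 ⟨(0, 0), ?_, ?_⟩
    · exact Finset.mem_product.2 ⟨zero_mem_delta A, zero_mem_delta B⟩
    · funext i
      show e2 (0 : ZMod 2) + w * e2 (0 : ZMod 2) = 0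
      simp [e2]
  have hUcard : (Finset.univ : Finset (Fin m → F)).card = 2 ^ (2 * m) := by
    rw [Finset.card_univ, Fintype.card_fun, hF, Fintype.card_fin, h4]
  have hpart1 : ((Finset.univ.erase (0 : Fin m → F))
      \ ((delta A ×ˢ delta B).image (dvec w))).card
      = 2 ^ (2 * m) - 2 ^ (A.card + B.card) := by
    have hDcset : (Finset.univ.erase (0 : Fin m → F))
        \ ((delta A ×ˢ delta B).image (dvec w))
        = (Finset.univ.erase (0 : Fin m → F))
          \ (((delta A ×ˢ delta B).image (dvec w)).erase 0) := by
      ext x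
      simp only [Finset.mem_sdiff, Finset.mem_erase, Finset.mem_univ, and_true, true_and]
      tauto
    rw [hDcset, Finset.card_sdiff_of_subset (Finset.erase_subset_erase _ (Finset.subset_univ _)),
      Finset.card_erase_of_mem (Finset.mem_univ _), Finset.card_erase_of_mem h0DF,
      hDFcard, hUcard]
    have hle : 2 ^ (A.card + B.card) ≤ 2 ^ (2 * m) :=
      Nat.pow_le_pow_right (by norm_num) (by omega)
    have h1le : 1 ≤ 2 ^ (A.card + B.card) := Nat.one_le_two_pow
    omega
  -- Part 2 : number of codewords
  have hinjcw : Function.Injective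
      (fun ab : (Fin m → ZMod 2) × (Fin m → ZMod 2) =>
        cw2F ((Finset.univ.erase (0 : Fin m → F))
          \ ((delta A ×ˢ delta B).image (dvec w))) π₁ π₂ ab.1 ab.2) := by
    intro ab cd h
    simp only at h
    have hzero : wt2F ((Finset.univ.erase (0 : Fin m → F))
        \ ((delta A ×ˢ delta B).image (dvec w))) π₁ π₂
        (ab.1 + cd.1) (ab.2 + cd.2) = 0 := by
      unfold wt2F
      rw [Finset.card_eq_zero, Finset.filter_eq_empty_iff]
      intro d hd
      simp only [ne_eq, not_not]
      have hv : dot2 ab.1 (fun i => π₂ (d i))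
            + dot2 ab.2 (fun i => π₁ (d i) + π₂ (d i))
          = dot2 cd.1 (fun i => π₂ (d i))
            + dot2 cd.2 (fun i => π₁ (d i) + π₂ (d i)) := congrFun h ⟨d, hd⟩
      rw [dot2_add_left, dot2_add_left]
      rw [show dot2 ab.1 (fun i => π₂ (d i)) + dot2 cd.1 (fun i => π₂ (d i))
            + (dot2 ab.2 (fun i => π₁ (d i) + π₂ (d i))
              + dot2 cd.2 (fun i => π₁ (d i) + π₂ (d i)))
          = (dot2 ab.1 (fun i => π₂ (d i)) + dot2 ab.2 (fun i => π₁ (d i) + π₂ (d i)))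
            + (dot2 cd.1 (fun i => π₂ (d i)) + dot2 cd.2 (fun i => π₁ (d i) + π₂ (d i)))
          from by abel]
      rw [hv]
      exact z2add _
    rw [wtv] at hzero
    split_ifs at hzero with h1 h2
    · exact Prod.ext_iff.2 ⟨vcancel _ _ h2.1, vcancel _ _ h2.2⟩
    · have : (0:ℕ) < 2 ^ (2 * m - 1) := Nat.pow_pos (by norm_num)
      omega
    · omega
  have hpart2 : (Finset.univ.image
      (fun ab : (Fin m → ZMod 2) × (Fin m → ZMod 2) =>
        cw2F ((Finset.univ.erase (0 : Fin m → F))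
          \ ((delta A ×ˢ delta B).image (dvec w))) π₁ π₂ ab.1 ab.2)).card
      = 2 ^ (2 * m) := by
    rw [Finset.card_image_of_injective _ hinjcw, card_univ_pairs]
  -- Part 3 : minimum weight
  have hpart3a : ∀ α β : Fin m → ZMod 2,
      wt2F ((Finset.univ.erase (0 : Fin m → F))
        \ ((delta A ×ˢ delta B).image (dvec w))) π₁ π₂ α β = 0
      ∨ 2 ^ (2 * m - 1) - 2 ^ (A.card + B.card - 1)
        ≤ wt2F ((Finset.univ.erase (0 : Fin m → F))
          \ ((delta A ×ˢ delta B).image (dvec w))) π₁ π₂ α β := by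
    intro α β
    rw [wtv]
    split_ifs with h1 h2
    · left; rfl
    · right; exact Nat.sub_le _ _
    · right; exact le_refl _
  have hpart3b : ∃ α β : Fin m → ZMod 2,
      wt2F ((Finset.univ.erase (0 : Fin m → F))
        \ ((delta A ×ˢ delta B).image (dvec w))) π₁ π₂ α β
      = 2 ^ (2 * m - 1) - 2 ^ (A.card + B.card - 1) := by
    by_cases hA : A.Nonempty
    · obtain ⟨i, hi⟩ := hA
      refine ⟨evec i, evec i, ?_⟩
      rw [wtv, if_neg]
      rintro ⟨h1, _⟩
      have := h1 i hi
      simp [evec] at this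
    · have hB : B.Nonempty := by
        rw [Finset.not_nonempty_iff_eq_empty] at hA
        refine Finset.card_pos.1 ?_
        have : A.card = 0 := by simp [hA]
        omega
      obtain ⟨i, hi⟩ := hB
      refine ⟨evec i, 0, ?_⟩
      rw [wtv, if_neg]
      rintro ⟨_, h2⟩
      have := h2 i hi
      simp [evec] at this
  -- Part 4 : weight distribution
  have hpart4 : (Finset.univ.val.map
      (fun ab : (Fin m → ZMod 2) × (Fin m → ZMod 2) =>
        wt2F ((Finset.univ.erase (0 : Fin m → F))
          \ ((delta A ×ˢ delta B).image (dvec w))) π₁ π₂ ab.1 ab.2))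
      = Multiset.replicate 1 0
        + Multiset.replicate (4 ^ m - 2 ^ (2 * m - A.card - B.card))
            (2 ^ (2 * m - 1) - 2 ^ (A.card + B.card - 1))
        + Multiset.replicate (2 ^ (2 * m - A.card - B.card) - 1) (2 ^ (2 * m - 1)) := by
    set K := Finset.univ.filter
      (fun q : (Fin m → ZMod 2) × (Fin m → ZMod 2) =>
        (∀ i ∈ A, q.2 i = 0) ∧ ∀ i ∈ B, q.1 i + q.2 i = 0) with hK
    have hzK : (0 : (Fin m → ZMod 2) × (Fin m → ZMod 2)) ∈ K :=
      Finset.mem_filter.2 ⟨Finset.mem_univ _, fun i _ => rfl, fun i _ => by simp⟩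
    have hKcard : K.card = 2 ^ (2 * m - A.card - B.card) := count_V A B
    have hsingle : ({0} : Finset ((Fin m → ZMod 2) × (Fin m → ZMod 2))) ⊆ K :=
      Finset.singleton_subset_iff.2 hzK
    have hval1 : (Finset.univ : Finset ((Fin m → ZMod 2) × (Fin m → ZMod 2))).val
        = K.val + (Finset.univ \ K).val := val_split (Finset.subset_univ K)
    have hval2 : K.val = ({0} : Finset ((Fin m → ZMod 2) × (Fin m → ZMod 2))).val
        + (K \ {0}).val := val_split hsingle
    rw [hval1, Multiset.map_add, hval2, Multiset.map_add]
    have hm1 : (({0} : Finset ((Fin m → ZMod 2) × (Fin m → ZMod 2))).val.map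
        (fun ab : (Fin m → ZMod 2) × (Fin m → ZMod 2) =>
        wt2F ((Finset.univ.erase (0 : Fin m → F))
          \ ((delta A ×ˢ delta B).image (dvec w))) π₁ π₂ ab.1 ab.2))
        = Multiset.replicate 1 0 := by
      rw [Finset.singleton_val, Multiset.map_singleton, Multiset.replicate_one]
      exact congrArg (fun n => ({n} : Multiset ℕ)) hwt0
    have hm2 : ((K \ {0}).val.map
        (fun ab : (Fin m → ZMod 2) × (Fin m → ZMod 2) =>
        wt2F ((Finset.univ.erase (0 : Fin m → F))
          \ ((delta A ×ˢ delta B).image (dvec w))) π₁ π₂ ab.1 ab.2))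
        = Multiset.replicate (2 ^ (2 * m - A.card - B.card) - 1) (2 ^ (2 * m - 1)) := by
      rw [map_const_replicate _ _ (2 ^ (2 * m - 1)) ?_, Finset.card_sdiff_of_subset hsingle,
        Finset.card_singleton, hKcard]
      intro ab hab
      rw [Finset.mem_sdiff] at hab
      have hV := (Finset.mem_filter.1 hab.1).2
      have hne : ¬(ab.1 = 0 ∧ ab.2 = 0) := by
        rintro ⟨ha, hb⟩
        exact hab.2 (Finset.mem_singleton.2 (Prod.ext_iff.2 ⟨ha, hb⟩))
      rw [wtv, if_pos hV, if_neg hne]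
    have hm3 : ((Finset.univ \ K).val.map
        (fun ab : (Fin m → ZMod 2) × (Fin m → ZMod 2) =>
        wt2F ((Finset.univ.erase (0 : Fin m → F))
          \ ((delta A ×ˢ delta B).image (dvec w))) π₁ π₂ ab.1 ab.2))
        = Multiset.replicate (4 ^ m - 2 ^ (2 * m - A.card - B.card))
            (2 ^ (2 * m - 1) - 2 ^ (A.card + B.card - 1)) := by
      rw [map_const_replicate _ _ (2 ^ (2 * m - 1) - 2 ^ (A.card + B.card - 1)) ?_,
        Finset.card_sdiff_of_subset (Finset.subset_univ K), card_univ_pairs, hKcard, h4]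
      intro ab hab
      rw [Finset.mem_sdiff] at hab
      have hnV : ¬((∀ i ∈ A, ab.2 i = 0) ∧ ∀ i ∈ B, ab.1 i + ab.2 i = 0) := by
        intro hc
        exact hab.2 (Finset.mem_filter.2 ⟨Finset.mem_univ _, hc⟩)
      rw [wtv, if_neg hnV]
    rw [hm1, hm2, hm3, add_assoc, add_assoc]
    congr 1
    exact add_comm _ _
  -- Part 5 : Griesmer
  have hpart5 : ∑ i ∈ Finset.range (2 * m),
      ⌈((2 ^ (2 * m - 1) - 2 ^ (A.card + B.card - 1) : ℚ)) / 2 ^ i⌉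
      = (2 ^ (2 * m) - 2 ^ (A.card + B.card) : ℤ) :=
    griesmer_sum (2 * m) (A.card + B.card) hAB (by omega)
  exact ⟨hpart1, hpart2, ⟨hpart3a, hpart3b⟩, hpart4, hpart5⟩
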